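/- arXiv:math/0402288 — 3 statements merged into one kernel-verified Lean document; each statement's English description precedes it below -/
import Mathlib

section
/- Define the Catalan polynomials φ_k in ℚ[X] by φ_0 = 0, φ_1 = X, and the three-term recurrence X·φ_k = φ_{k-1} + 2·φ_k + φ_{k+1} (equivalently φ_{k+1} = (X-2)·φ_k - φ_{k-1}) for k ≥ 1. Then for every integer n ≥ 1 one has the triad expansion X^n = Σ_{k=1}^{n} (k/n)·binomial(2n, n-k) · φ_k. -/
open Polynomial

/-- The Catalan polynomials in `ℚ[X]`: `φ_0 = 0`, `φ_1 = X`, and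
`φ_{k+1} = (X - 2)·φ_k - φ_{k-1}` (equivalently `X·φ_k = φ_{k-1} + 2φ_k + φ_{k+1}`)
for `k ≥ 1`. -/
noncomputable def catalanPoly : ℕ → Polynomial ℚ
  | 0 => 0
  | 1 => X
  | (k + 2) => (X - 2) * catalanPoly (k + 1) - catalanPoly k

def Fc (n k : ℕ) : ℚ :=
  if k ≤ n then (k : ℚ) / (n : ℚ) * ((2 * n).choose (n - k) : ℚ) else 0

lemma catalanPoly_add_two (k : ℕ) :
    catalanPoly (k + 2) = (X - 2) * catalanPoly (k + 1) - catalanPoly k := rfl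

lemma X_mul_catalanPoly (k : ℕ) :
    X * catalanPoly (k + 1) = catalanPoly k + 2 * catalanPoly (k + 1) + catalanPoly (k + 2) := by
  rw [catalanPoly_add_two]; ring

lemma Fc_zero (n : ℕ) : Fc n 0 = 0 := by simp [Fc]

lemma Fc_of_gt {n k : ℕ} (h : n < k) : Fc n k = 0 := by
  simp [Fc, Nat.not_le.mpr h]

lemma Fc_rec (n i : ℕ) (hn : 1 ≤ n) :
    Fc (n + 1) (i + 1) = Fc n i + 2 * Fc n (i + 1) + Fc n (i + 2) := by
  rcases Nat.lt_or_ge (i + 2) (n + 1) with h | h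
  · -- interior case: i + 2 ≤ n
    obtain ⟨m, rfl⟩ : ∃ m, n = i + m + 2 := ⟨n - i - 2, by omega⟩
    simp only [Fc, if_pos (by omega : i + 1 ≤ i + m + 2 + 1),
      if_pos (by omega : i ≤ i + m + 2), if_pos (by omega : i + 1 ≤ i + m + 2),
      if_pos (by omega : i + 2 ≤ i + m + 2)]
    have e1 : i + m + 2 + 1 - (i + 1) = m + 2 := by omega
    have e2 : i + m + 2 - i = m + 2 := by omega
    have e3 : i + m + 2 - (i + 1) = m + 1 := by omega
    have e4 : i + m + 2 - (i + 2) = m := by omega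
    rw [e1, e2, e3, e4]
    have hA : ((2 * (i + m + 2 + 1)).choose (m + 2) : ℚ)
        = ((2 * (i + m + 2)).choose (m + 2) : ℚ)
          + 2 * ((2 * (i + m + 2)).choose (m + 1) : ℚ)
          + ((2 * (i + m + 2)).choose m : ℚ) := by
      rw [show 2 * (i + m + 2 + 1) = (2 * (i + m + 2) + 1) + 1 by ring]
      rw [show m + 2 = (m + 1) + 1 from rfl, Nat.choose_succ_succ,
        Nat.choose_succ_succ (2 * (i + m + 2)) m,
        Nat.choose_succ_succ (2 * (i + m + 2)) (m + 1)]
      push_cast; ring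
    have h1 : ((2 * (i + m + 2)).choose (m + 2) : ℚ) * ((m : ℚ) + 2)
        = ((2 * (i + m + 2)).choose (m + 1) : ℚ) * (2 * (i : ℚ) + m + 3) := by
      have t := Nat.choose_succ_right_eq (2 * (i + m + 2)) (m + 1)
      rw [show 2 * (i + m + 2) - (m + 1) = 2 * i + m + 3 by omega] at t
      exact_mod_cast congrArg (Nat.cast : ℕ → ℚ) t
    have h2 : ((2 * (i + m + 2)).choose (m + 1) : ℚ) * ((m : ℚ) + 1)
        = ((2 * (i + m + 2)).choose m : ℚ) * (2 * (i : ℚ) + m + 4) := by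
      have t := Nat.choose_succ_right_eq (2 * (i + m + 2)) m
      rw [show 2 * (i + m + 2) - m = 2 * i + m + 4 by omega] at t
      exact_mod_cast congrArg (Nat.cast : ℕ → ℚ) t
    have hn0 : ((i : ℚ) + m + 2) ≠ 0 := by positivity
    have hn1 : ((i : ℚ) + m + 2 + 1) ≠ 0 := by positivity
    push_cast
    push_cast at hA h1 h2
    set a := ((2 * (i + m + 2)).choose (m + 2) : ℚ)
    set b := ((2 * (i + m + 2)).choose (m + 1) : ℚ)
    set c := ((2 * (i + m + 2)).choose m : ℚ)
    rw [hA]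
    have key : ((i : ℚ) + 1) * (((i : ℚ) + m + 2) * (a + 2 * b + c))
        = ((i : ℚ) + m + 3) * ((i : ℚ) * a + 2 * ((i : ℚ) + 1) * b + ((i : ℚ) + 2) * c) := by
      linear_combination h1 + h2
    field_simp
    linear_combination key
  · rcases Nat.lt_or_ge (n + 1) (i + 1) with h' | h'
    · rw [Fc_of_gt (by omega), Fc_of_gt (by omega), Fc_of_gt (by omega), Fc_of_gt (by omega)]
      ring
    · rcases Nat.eq_or_lt_of_le h' with h'' | h''
      · -- i = n
        obtain rfl : i = n := by omega
        rw [Fc_of_gt (show i < i + 1 by omega), Fc_of_gt (show i < i + 2 by omega)]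
        simp only [Fc, if_pos (le_refl (i + 1)), if_pos (le_refl i), Nat.sub_self,
          Nat.choose_zero_right, Nat.cast_one]
        have h0 : ((i : ℚ)) ≠ 0 := Nat.cast_ne_zero.mpr (by omega)
        have h1 : ((i : ℚ) + 1) ≠ 0 := by positivity
        push_cast
        field_simp
        ring
      · -- n = i + 1
        obtain rfl : n = i + 1 := by omega
        rw [Fc_of_gt (show i + 1 < i + 2 by omega)]
        simp only [Fc, if_pos (by omega : i + 1 ≤ i + 1 + 1), if_pos (by omega : i ≤ i + 1),
          if_pos (le_refl (i + 1))]
        rw [show i + 1 + 1 - (i + 1) = 1 by omega, show i + 1 - i = 1 by omega, Nat.sub_self]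
        simp only [Nat.choose_one_right, Nat.choose_zero_right]
        push_cast
        have h0 : ((i : ℚ) + 1) ≠ 0 := by positivity
        have h0' : ((i : ℚ) + 1 + 1) ≠ 0 := by positivity
        field_simp
        ring

lemma Fc_of_gt' (n : ℕ) : Fc n (n + 1) = 0 := Fc_of_gt (by omega)

lemma aux_expand (n : ℕ) (hn : 1 ≤ n) :
    (X : Polynomial ℚ) ^ n
      = ∑ i ∈ Finset.range n, C (Fc n (i + 1)) * catalanPoly (i + 1) := by
  induction n, hn using Nat.le_induction with
  | base =>
    simp [Fc, catalanPoly]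
  | succ n hn ih =>
    have c2 : (C (2 : ℚ)) = 2 := map_ofNat C 2
    have step : ∀ i, C (Fc (n + 1) (i + 1)) =
        C (Fc n i) + 2 * C (Fc n (i + 1)) + C (Fc n (i + 2)) := by
      intro i
      rw [Fc_rec n i hn, C_add, C_add, C_mul, c2]
    have s1 : ∑ i ∈ Finset.range (n + 1), C (Fc n i) * catalanPoly (i + 1)
        = ∑ i ∈ Finset.range n, C (Fc n (i + 1)) * catalanPoly (i + 2) := by
      rw [Finset.sum_range_succ' (fun i => C (Fc n i) * catalanPoly (i + 1)) n]
      simp [Fc_zero]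
    have s2 : ∑ i ∈ Finset.range (n + 1), 2 * (C (Fc n (i + 1)) * catalanPoly (i + 1))
        = ∑ i ∈ Finset.range n, 2 * (C (Fc n (i + 1)) * catalanPoly (i + 1)) := by
      rw [Finset.sum_range_succ]
      simp [Fc_of_gt' n]
    have s3 : ∑ i ∈ Finset.range (n + 1), C (Fc n (i + 2)) * catalanPoly (i + 1)
        = ∑ i ∈ Finset.range n, C (Fc n (i + 1)) * catalanPoly i := by
      have t1 : ∑ i ∈ Finset.range (n + 1), C (Fc n (i + 1)) * catalanPoly i
          = ∑ i ∈ Finset.range n, C (Fc n (i + 2)) * catalanPoly (i + 1) := by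
        rw [Finset.sum_range_succ' (fun i => C (Fc n (i + 1)) * catalanPoly i) n]
        simp [catalanPoly]
      have t2 : ∑ i ∈ Finset.range (n + 1), C (Fc n (i + 1)) * catalanPoly i
          = ∑ i ∈ Finset.range n, C (Fc n (i + 1)) * catalanPoly i := by
        rw [Finset.sum_range_succ]
        simp [Fc_of_gt' n]
      rw [Finset.sum_range_succ, ← t1, t2]
      simp [Fc_of_gt (show n < n + 2 by omega)]
    calc (X : Polynomial ℚ) ^ (n + 1)
        = X * X ^ n := by ring
      _ = ∑ i ∈ Finset.range n, (C (Fc n (i + 1)) * catalanPoly i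
            + 2 * (C (Fc n (i + 1)) * catalanPoly (i + 1))
            + C (Fc n (i + 1)) * catalanPoly (i + 2)) := by
          rw [ih, Finset.mul_sum]
          apply Finset.sum_congr rfl; intro i _
          rw [mul_left_comm, X_mul_catalanPoly]; ring
      _ = (∑ i ∈ Finset.range n, C (Fc n (i + 1)) * catalanPoly i)
            + (∑ i ∈ Finset.range n, 2 * (C (Fc n (i + 1)) * catalanPoly (i + 1)))
            + ∑ i ∈ Finset.range n, C (Fc n (i + 1)) * catalanPoly (i + 2) := by
          rw [Finset.sum_add_distrib, Finset.sum_add_distrib]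
      _ = ∑ i ∈ Finset.range (n + 1), C (Fc (n + 1) (i + 1)) * catalanPoly (i + 1) := by
          have expand : ∑ i ∈ Finset.range (n + 1), C (Fc (n + 1) (i + 1)) * catalanPoly (i + 1)
              = (∑ i ∈ Finset.range (n + 1), C (Fc n i) * catalanPoly (i + 1))
                + (∑ i ∈ Finset.range (n + 1), 2 * (C (Fc n (i + 1)) * catalanPoly (i + 1)))
                + ∑ i ∈ Finset.range (n + 1), C (Fc n (i + 2)) * catalanPoly (i + 1) := by
            rw [← Finset.sum_add_distrib, ← Finset.sum_add_distrib]
            apply Finset.sum_congr rfl; intro i _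
            rw [step i]; ring
          rw [expand, s1, s2, s3]; ring

/-- The triad expansion `X^n = Σ_{k=1}^{n} (k/n)·binomial(2n, n-k) · φ_k`. -/
theorem catalan_triad (n : ℕ) (hn : 1 ≤ n) :
    (X : Polynomial ℚ) ^ n =
      ∑ k ∈ Finset.Icc 1 n,
        C ((k : ℚ) / (n : ℚ) * (Nat.choose (2 * n) (n - k) : ℚ)) * catalanPoly k := by
  rw [← Finset.Ico_add_one_right_eq_Icc, Finset.sum_Ico_eq_sum_range]
  rw [show n + 1 - 1 = n from rfl]
  rw [aux_expand n hn]
  apply Finset.sum_congr rfl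
  intro i hi
  rw [Finset.mem_range] at hi
  rw [show 1 + i = i + 1 by omega]
  congr 1
  rw [Fc, if_pos (by omega : i + 1 ≤ n)]
end

section
/- For all integers n ≥ 0 and 1 ≤ k ≤ n+1, the Fibonomial coefficients satisfy the recurrence (n+1 choose k)_F = F_{k-1}·(n choose k)_F + F_{n-k+2}·(n choose k-1)_F, with the boundary conditions (n choose 0)_F = 1 and (n choose k)_F = 0 for k > n. -/
/-- The Fibonacci factorial `n_F! = F_n·F_{n-1}⋯F_1`, with `0_F! = 1`. -/
def fibFact (n : ℕ) : ℕ := ∏ i ∈ Finset.range n, Nat.fib (i + 1)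

/-- The Fibonomial coefficient `(n choose k)_F = n_F!/(k_F!·(n-k)_F!)` for
`k ≤ n`, and `0` for `k > n`. -/
def fibBinom (n k : ℕ) : ℚ :=
  if k ≤ n then (fibFact n : ℚ) / ((fibFact k : ℚ) * (fibFact (n - k) : ℚ)) else 0

lemma fibFact_ne_zero' (n : ℕ) : fibFact n ≠ 0 := by
  unfold fibFact
  apply Finset.prod_ne_zero_iff.mpr
  intro i _
  exact (Nat.fib_pos.mpr (Nat.succ_pos i)).ne'

lemma fibFact_ne_zero (n : ℕ) : (fibFact n : ℚ) ≠ 0 := by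
  exact_mod_cast fibFact_ne_zero' n

lemma fibFact_succ (n : ℕ) : fibFact (n + 1) = fibFact n * Nat.fib (n + 1) := by
  unfold fibFact
  rw [Finset.prod_range_succ]

theorem fibBinom_recurrence2 (n k : ℕ) (hk : 1 ≤ k) (hkn : k ≤ n + 1) :
    fibBinom (n + 1) k =
      (Nat.fib (k - 1) : ℚ) * fibBinom n k + (Nat.fib (n - k + 2) : ℚ) * fibBinom n (k - 1) ∧
    fibBinom n 0 = 1 ∧ ∀ j : ℕ, n < j → fibBinom n j = 0 := by
  refine ⟨?_, ?_, ?_⟩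
  · obtain ⟨m, rfl⟩ : ∃ m, k = m + 1 := ⟨k - 1, (Nat.succ_pred_eq_of_pos hk).symm⟩
    simp only [Nat.add_sub_cancel]
    have hm : m ≤ n := Nat.lt_succ_iff.mp hkn
    rcases eq_or_lt_of_le hm with rfl | hlt
    · have h2 : m - (m + 1) + 2 = 2 := by omega
      rw [h2]
      rw [fibBinom, fibBinom, fibBinom, if_pos le_rfl, if_pos le_rfl,
        if_neg (by omega)]
      rw [show m + 1 - (m + 1) = 0 from by omega, Nat.sub_self,
        show (fibFact 0 : ℚ) = 1 from by simp [fibFact]]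
      norm_num [div_self (fibFact_ne_zero (m + 1)), div_self (fibFact_ne_zero m)]
    · obtain ⟨a, rfl⟩ : ∃ a, n = m + 1 + a := ⟨n - (m + 1), by omega⟩
      have e1 : m + 1 + a + 1 - (m + 1) = a + 1 := by omega
      have e2 : m + 1 + a - (m + 1) = a := by omega
      have e3 : m + 1 + a - m = a + 1 := by omega
      have e4 : m + 1 + a - (m + 1) + 2 = a + 2 := by omega
      rw [fibBinom, fibBinom, fibBinom, if_pos (by omega), if_pos (by omega),
        if_pos (by omega), e1, e2, e3]
      have hfib : Nat.fib (m + (a + 1) + 1) =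
          Nat.fib m * Nat.fib (a + 1) + Nat.fib (m + 1) * Nat.fib (a + 2) :=
        Nat.fib_add m (a + 1)
      have key : (Nat.fib (m + a + 2) : ℚ) =
          (Nat.fib m : ℚ) * Nat.fib (a + 1) + (Nat.fib (m + 1) : ℚ) * Nat.fib (a + 2) := by
        have h : m + (a + 1) + 1 = m + a + 2 := by ring
        rw [h] at hfib
        exact_mod_cast hfib
      have F1 : fibFact (m + 1 + a + 1) = fibFact (m + 1 + a) * Nat.fib (m + a + 2) := by
        have := fibFact_succ (m + 1 + a)
        convert this using 3; omega
      have F2 : fibFact (m + 1) = fibFact m * Nat.fib (m + 1) := fibFact_succ m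
      have F3 : fibFact (a + 1) = fibFact a * Nat.fib (a + 1) := fibFact_succ a
      rw [F1, F2, F3]
      push_cast
      rw [key]
      have h1 := fibFact_ne_zero (m + 1 + a)
      have h2 := fibFact_ne_zero m
      have h3 := fibFact_ne_zero a
      have h4 : (Nat.fib (m + 1) : ℚ) ≠ 0 := by
        exact_mod_cast (Nat.fib_pos.mpr (Nat.succ_pos m)).ne'
      have h5 : (Nat.fib (a + 1) : ℚ) ≠ 0 := by
        exact_mod_cast (Nat.fib_pos.mpr (Nat.succ_pos a)).ne'
      field_simp
  · rw [fibBinom, if_pos (Nat.zero_le n), Nat.sub_zero,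
      show (fibFact 0 : ℚ) = 1 from by simp [fibFact], one_mul, div_self (fibFact_ne_zero n)]
  · intro j hj
    rw [fibBinom, if_neg (by omega)]
end

section
/- For all integers 0 ≤ k ≤ n, the product k_F!·(n-k)_F! of Fibonacci factorials divides the Fibonacci factorial n_F!; consequently every Fibonomial coefficient (n choose k)_F is a positive integer. -/
/-- Natural-number fibonomial, defined by the Fibonacci Pascal recurrence. -/
def fb : ℕ → ℕ → ℕ
  | _, 0 => 1
  | 0, _ + 1 => 0
  | n + 1, k + 1 => Nat.fib (n - k + 1) * fb n k + Nat.fib k * fb n (k + 1)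

lemma fibFact_pos (n : ℕ) : 0 < fibFact n :=
  Finset.prod_pos fun i _ => Nat.fib_pos.2 i.succ_pos

lemma fb_eq_zero : ∀ n k, n < k → fb n k = 0 := by
  intro n
  induction n with
  | zero => intro k hk; cases k with | zero => omega | succ m => rfl
  | succ n ih =>
    intro k hk
    cases k with
    | zero => omega
    | succ m =>
      simp only [fb]
      rw [ih m (by omega), ih (m + 1) (by omega)]
      simp

lemma fb_key : ∀ n k, k ≤ n → fibFact k * fibFact (n - k) * fb n k = fibFact n := by
  intro n
  induction n with
  | zero => intro k hk; interval_cases k; simp [fb, fibFact]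
  | succ n ih =>
    intro k hk
    cases k with
    | zero => simp [fb, fibFact]
    | succ k =>
      rcases Nat.lt_or_ge k n with h | h
      · -- k + 1 ≤ n
        obtain ⟨d, rfl⟩ : ∃ d, n = k + 1 + d := ⟨n - (k + 1), by omega⟩
        have h1 := ih k (by omega)
        have h2 := ih (k + 1) (by omega)
        have hs1 : k + 1 + d - k = d + 1 := by omega
        have hs2 : k + 1 + d - (k + 1) = d := by omega
        rw [hs1] at h1
        rw [hs2] at h2
        have hrec : fb (k + 1 + d + 1) (k + 1)
            = Nat.fib (d + 2) * fb (k + 1 + d) k + Nat.fib k * fb (k + 1 + d) (k + 1) := by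
          show Nat.fib (k + 1 + d - k + 1) * fb (k + 1 + d) k + _ = _
          rw [hs1]
        have hfib : Nat.fib (k + 1 + d + 1)
            = Nat.fib k * Nat.fib (d + 1) + Nat.fib (k + 1) * Nat.fib (d + 2) := by
          have := Nat.fib_add k (d + 1)
          convert this using 2; omega
        have hgoal : k + 1 + d + 1 - (k + 1) = d + 1 := by omega
        rw [hgoal, hrec, fibFact_succ (k + 1 + d), fibFact_succ k, fibFact_succ d, hfib]
        rw [fibFact_succ d] at h1
        rw [fibFact_succ k] at h2
        zify at h1 h2 ⊢
        linear_combination ((Nat.fib (k + 1) : ℤ) * Nat.fib (d + 2)) * h1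
          + ((Nat.fib k : ℤ) * Nat.fib (d + 1)) * h2
      · -- k = n
        have : k = n := by omega
        subst this
        have h1 := ih k le_rfl
        simp only [Nat.sub_self] at h1 ⊢
        have hb : fb (k + 1) (k + 1) = fb k k := by
          show Nat.fib (k - k + 1) * fb k k + Nat.fib k * fb k (k + 1) = _
          rw [Nat.sub_self, fb_eq_zero k (k + 1) (by omega)]
          simp
        have hfb : fb k k = 1 := by
          have hp := fibFact_pos k
          have h2 : fibFact k * fb k k = fibFact k * 1 := by
            rw [mul_one]; simpa [fibFact] using h1
          exact Nat.eq_of_mul_eq_mul_left hp h2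
        rw [hb, hfb]
        simp [fibFact]

/-- `k_F!·(n-k)_F!` divides `n_F!`, so every Fibonomial coefficient is a
positive integer. -/
theorem fibFact_mul_fibFact_dvd (n k : ℕ) (hk : k ≤ n) :
    fibFact k * fibFact (n - k) ∣ fibFact n ∧
    ∃ c : ℕ, 0 < c ∧ fibBinom n k = (c : ℚ) := by
  have key := fb_key n k hk
  constructor
  · exact ⟨fb n k, key.symm⟩
  · refine ⟨fb n k, ?_, ?_⟩
    · rcases Nat.eq_zero_or_pos (fb n k) with h | h
      · rw [h, mul_zero] at key; exact absurd key.symm (fibFact_pos n).ne'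
      · exact h
    · rw [fibBinom, if_pos hk, ← key]
      have h1 : (fibFact k : ℚ) ≠ 0 := Nat.cast_ne_zero.2 (fibFact_pos k).ne'
      have h2 : (fibFact (n - k) : ℚ) ≠ 0 := Nat.cast_ne_zero.2 (fibFact_pos (n - k)).ne'
      push_cast
      field_simp
end
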